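/- Let μ ∈ ℝ, let A : ℝ → ℝ be smooth, let 𝔄 : ℝ → ℝ be smooth with 𝔄′ = A, and set f(x) = e^{μ/x}x^{−3}, h(x) = e^{μ/x}x^{−1} on (0,∞). Then for every smooth solution u : ℝ × (0,∞) → ℝ of the equation f(x)u_t = (A(u)u_x)_x + h(x)u_x (the case B = 1), both pairs F₁ = f(x)e^{−μt}x·u, G₁ = −e^{−μt}x(A(u)u_x + h(x)u) + e^{−μt}𝔄(u) and F₂ = f(x)e^{−μt}(tx−1)u, G₂ = −e^{−μt}(tx−1)(A(u)u_x + h(x)u) + t·e^{−μt}𝔄(u) satisfy the conservation-law identity ∂_t F + ∂_x G = 0 at every point of ℝ × (0,∞). -/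

import Mathlib

open Set Real
open scoped ContDiff

/-- For the equation `f(x) u_t = (A(u) u_x)_x + h(x) u_x` on `(0,∞)` with
`f(x) = e^{μ/x} x^{-3}`, `h(x) = e^{μ/x} x^{-1}` (the case `B = 1`), both pairs
`F₁ = f(x) e^{-μt} x u`, `G₁ = -e^{-μt} x (A(u) u_x + h(x) u) + e^{-μt} 𝔄(u)` and
`F₂ = f(x) e^{-μt} (tx-1) u`, `G₂ = -e^{-μt}(tx-1)(A(u) u_x + h(x) u) + t e^{-μt} 𝔄(u)`
(where `𝔄' = A`) are conserved vectors. -/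
theorem conservation_laws_case_B_one_f_exp_inv_cube
    (μ : ℝ) (A FA : ℝ → ℝ) (hA : ContDiff ℝ ∞ A)
    (hFA : ContDiff ℝ ∞ FA) (hFA' : ∀ v : ℝ, HasDerivAt FA (A v) v)
    (f h : ℝ → ℝ)
    (hfdef : ∀ x ∈ Ioi (0:ℝ), f x = Real.exp (μ / x) * x ^ (-3 : ℝ))
    (hhdef : ∀ x ∈ Ioi (0:ℝ), h x = Real.exp (μ / x) * x ^ (-1 : ℝ))
    (u : ℝ → ℝ → ℝ)
    (hu : ContDiffOn ℝ ∞ (fun p : ℝ × ℝ => u p.1 p.2) (univ ×ˢ Ioi 0))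
    (hpde : ∀ t : ℝ, ∀ x ∈ Ioi (0:ℝ),
      f x * deriv (fun s => u s x) t
        = deriv (fun y => A (u t y) * deriv (fun z => u t z) y) x
          + h x * deriv (fun y => u t y) x) :
    ∀ t : ℝ, ∀ x ∈ Ioi (0:ℝ),
      (deriv (fun s => f x * Real.exp (-μ * s) * x * u s x) t
        + deriv (fun y =>
            -(Real.exp (-μ * t) * y
                * (A (u t y) * deriv (fun z => u t z) y + h y * u t y))
              + Real.exp (-μ * t) * FA (u t y)) x = 0)
      ∧ (deriv (fun s => f x * Real.exp (-μ * s) * (s * x - 1) * u s x) t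
        + deriv (fun y =>
            -(Real.exp (-μ * t) * (t * y - 1)
                * (A (u t y) * deriv (fun z => u t z) y + h y * u t y))
              + t * Real.exp (-μ * t) * FA (u t y)) x = 0) := by
  intro t x hx
  have hx0 : (0:ℝ) < x := hx
  have hxne : x ≠ 0 := ne_of_gt hx0
  have one_le : (1 : WithTop ℕ∞) ≤ ∞ := by exact_mod_cast le_top
  -- smoothness in each variable
  have htx : ContDiff ℝ ∞ (fun s => u s x) := by
    rw [← contDiffOn_univ]
    exact hu.comp (contDiff_id.prodMk contDiff_const).contDiffOn
      (fun s _ => ⟨mem_univ _, hx⟩)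
  have huty : ContDiffOn ℝ ∞ (fun y => u t y) (Ioi 0) :=
    hu.comp (contDiff_const.prodMk contDiff_id).contDiffOn (fun y hy => ⟨mem_univ _, hy⟩)
  have hutydiff : DifferentiableAt ℝ (fun y => u t y) x :=
    (huty.contDiffAt (Ioi_mem_nhds hx0)).differentiableAt (by simp)
  have hux_der : HasDerivAt (fun y => u t y) (deriv (fun y => u t y) x) x :=
    hutydiff.hasDerivAt
  have hderiv_smooth : ContDiffOn ℝ ∞ (deriv (fun y => u t y)) (Ioi 0) :=
    huty.deriv_of_isOpen isOpen_Ioi le_rfl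
  have hudd : DifferentiableAt ℝ (deriv (fun y => u t y)) x :=
    (hderiv_smooth.contDiffAt (Ioi_mem_nhds hx0)).differentiableAt (by simp)
  have hAu : DifferentiableAt ℝ (fun y => A (u t y)) x :=
    ((hA.differentiable (by simp)) (u t x)).comp x hutydiff
  have hP : DifferentiableAt ℝ (fun y => A (u t y) * deriv (fun z => u t z) y) x :=
    hAu.mul hudd
  have hPder : HasDerivAt (fun y => A (u t y) * deriv (fun z => u t z) y)
      (deriv (fun y => A (u t y) * deriv (fun z => u t z) y) x) x := hP.hasDerivAt
  have hut_der : HasDerivAt (fun s => u s x) (deriv (fun s => u s x) t) t :=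
    ((htx.differentiable (by simp)) t).hasDerivAt
  have hFAu : HasDerivAt (fun y => FA (u t y))
      (A (u t x) * deriv (fun y => u t y) x) x := (hFA' (u t x)).comp x hux_der
  -- derivative of h
  have hdiv : HasDerivAt (fun y => μ / y) (μ * -(x^2)⁻¹) x := by
    simpa [div_eq_mul_inv] using (hasDerivAt_inv hxne).const_mul μ
  have hg : HasDerivAt (fun y => Real.exp (μ / y) * y⁻¹)
      (Real.exp (μ / x) * (μ * -(x^2)⁻¹) * x⁻¹ + Real.exp (μ / x) * -(x^2)⁻¹) x :=
    hdiv.exp.mul (hasDerivAt_inv hxne)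
  have heq : h =ᶠ[nhds x] fun y => Real.exp (μ / y) * y⁻¹ := by
    filter_upwards [Ioi_mem_nhds hx0] with y hy
    rw [hhdef y hy, Real.rpow_neg_one]
  have hd : HasDerivAt h
      (Real.exp (μ / x) * (μ * -(x^2)⁻¹) * x⁻¹ + Real.exp (μ / x) * -(x^2)⁻¹) x :=
    hg.congr_of_eventuallyEq heq
  -- values of f and h at x
  have hfx : f x = Real.exp (μ / x) * (x^3)⁻¹ := by
    rw [hfdef x hx, show ((x:ℝ)^3)⁻¹ = (x ^ ((3:ℕ):ℝ))⁻¹ by rw [Real.rpow_natCast],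
      ← Real.rpow_neg hx0.le]
    norm_num
  have hhx : h x = Real.exp (μ / x) * x⁻¹ := by rw [hhdef x hx, Real.rpow_neg_one]
  -- time derivatives
  have hexp_t : HasDerivAt (fun s => Real.exp (-μ * s)) (Real.exp (-μ * t) * -μ) t := by
    simpa using ((hasDerivAt_id t).const_mul (-μ)).exp
  have hF1 : HasDerivAt (fun s => f x * Real.exp (-μ * s) * x * u s x)
      (f x * (Real.exp (-μ * t) * -μ) * x * u t x
        + f x * Real.exp (-μ * t) * x * deriv (fun s => u s x) t) t :=
    ((hexp_t.const_mul (f x)).mul_const x).mul hut_der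
  have hlin : HasDerivAt (fun s => s * x - 1) (1 * x) t :=
    ((hasDerivAt_id t).mul_const x).sub_const 1
  have hF2 : HasDerivAt (fun s => f x * Real.exp (-μ * s) * (s * x - 1) * u s x)
      ((f x * (Real.exp (-μ * t) * -μ) * (t * x - 1) + f x * Real.exp (-μ * t) * (1 * x)) * u t x
        + f x * Real.exp (-μ * t) * (t * x - 1) * deriv (fun s => u s x) t) t :=
    ((hexp_t.const_mul (f x)).mul hlin).mul hut_der
  -- space derivatives
  have hhu : HasDerivAt (fun y => h y * u t y)
      ((Real.exp (μ / x) * (μ * -(x^2)⁻¹) * x⁻¹ + Real.exp (μ / x) * -(x^2)⁻¹) * u t x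
        + h x * deriv (fun y => u t y) x) x := hd.mul hux_der
  have hsum := hPder.add hhu
  have hyy : HasDerivAt (fun y => Real.exp (-μ * t) * y) (Real.exp (-μ * t) * 1) x :=
    (hasDerivAt_id x).const_mul _
  have hG1 : HasDerivAt (fun y =>
      -(Real.exp (-μ * t) * y * (A (u t y) * deriv (fun z => u t z) y + h y * u t y))
        + Real.exp (-μ * t) * FA (u t y))
      (-(Real.exp (-μ * t) * 1 * (A (u t x) * deriv (fun z => u t z) x + h x * u t x)
          + Real.exp (-μ * t) * x *
            (deriv (fun y => A (u t y) * deriv (fun z => u t z) y) x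
              + ((Real.exp (μ / x) * (μ * -(x^2)⁻¹) * x⁻¹ + Real.exp (μ / x) * -(x^2)⁻¹) * u t x
                + h x * deriv (fun y => u t y) x)))
        + Real.exp (-μ * t) * (A (u t x) * deriv (fun y => u t y) x)) x :=
    (hyy.mul hsum).neg.add (hFAu.const_mul (Real.exp (-μ * t)))
  have hty : HasDerivAt (fun y => t * y - 1) (t * 1) x :=
    ((hasDerivAt_id x).const_mul t).sub_const 1
  have hc : HasDerivAt (fun y => Real.exp (-μ * t) * (t * y - 1))
      (Real.exp (-μ * t) * (t * 1)) x := hty.const_mul _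
  have hG2 : HasDerivAt (fun y =>
      -(Real.exp (-μ * t) * (t * y - 1)
          * (A (u t y) * deriv (fun z => u t z) y + h y * u t y))
        + t * Real.exp (-μ * t) * FA (u t y))
      (-((Real.exp (-μ * t) * (t * 1)) * (A (u t x) * deriv (fun z => u t z) x + h x * u t x)
          + Real.exp (-μ * t) * (t * x - 1) *
            (deriv (fun y => A (u t y) * deriv (fun z => u t z) y) x
              + ((Real.exp (μ / x) * (μ * -(x^2)⁻¹) * x⁻¹ + Real.exp (μ / x) * -(x^2)⁻¹) * u t x
                + h x * deriv (fun y => u t y) x)))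
        + t * Real.exp (-μ * t) * (A (u t x) * deriv (fun y => u t y) x)) x :=
    (hc.mul hsum).neg.add (hFAu.const_mul (t * Real.exp (-μ * t)))
  have pde := hpde t x hx
  have hEx : deriv (fun y => A (u t y) * deriv (fun z => u t z) y) x
      = f x * deriv (fun s => u s x) t - h x * deriv (fun y => u t y) x := by linarith
  constructor
  · rw [hF1.deriv, hG1.deriv, hEx, hfx, hhx]
    field_simp
    ring
  · rw [hF2.deriv, hG2.deriv, hEx, hfx, hhx]
    field_simp
    ring
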